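/- (Higher-moment sufficiency via Kronecker powers) Let $(A_t)$ be i.i.d. random nonnegative $n\times n$ matrices and $(B_t)$ i.i.d. nonnegative random vectors with the usual independence, and fix an integer $r\geq 1$. If $\rho\big(E[A_0^{\otimes r}]\big) < 1$ and $E[\|B_0\|^r]<\infty$, then the partial sums $S_n(t) = B_t + \sum_{k=1}^{n} A_t\cdots A_{t-k+1}B_{t-k}$ converge in $L^r$ and almost surely to a limit $Y_t$ with $E[\|Y_t\|^r]<\infty$ satisfying $Y_t = A_t Y_{t-1}+B_t$. -/

import Mathlib

open MeasureTheory ProbabilityTheory Matrix Filter Topology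
open scoped NNReal ENNReal

/-- Matrices carry the product (Borel) measurable structure. -/
instance matrixMeasurableSpace {m n : Type*} {α : Type*} [MeasurableSpace α] :
    MeasurableSpace (Matrix m n α) :=
  (inferInstance : MeasurableSpace (m → n → α))

/-- The `r`-fold Kronecker power `M^{⊗r}` of a square matrix. -/
noncomputable def kronPow {n : ℕ} (M : Matrix (Fin n) (Fin n) ℝ) :
    (r : ℕ) → Matrix (Fin (n ^ r)) (Fin (n ^ r)) ℝ
  | 0 => 1
  | r + 1 =>
    Matrix.reindex (finProdFinEquiv.trans (finCongr (pow_succ n r).symm))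
      (finProdFinEquiv.trans (finCongr (pow_succ n r).symm))
      (Matrix.kroneckerMap (· * ·) (kronPow M r) M)

/-- The `r`-fold Kronecker power `v^{⊗r}` of a vector. -/
noncomputable def kronPowVec {n : ℕ} (v : Fin n → ℝ) :
    (r : ℕ) → Fin (n ^ r) → ℝ
  | 0 => fun _ => 1
  | r + 1 => fun i =>
    kronPowVec v r ((finProdFinEquiv.trans (finCongr (pow_succ n r).symm)).symm i).1 *
      v ((finProdFinEquiv.trans (finCongr (pow_succ n r).symm)).symm i).2

/-- `prodA A t ω k = A_t(ω) A_{t-1}(ω) ⋯ A_{t-k+1}(ω)` (`k` factors); the empty product is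
the identity. -/
noncomputable def prodA {n : ℕ} {Ω : Type*} (A : ℤ → Ω → Matrix (Fin n) (Fin n) ℝ)
    (t : ℤ) (ω : Ω) : ℕ → Matrix (Fin n) (Fin n) ℝ
  | 0 => 1
  | k + 1 => prodA A t ω k * A (t - k) ω

section Spectral

attribute [local instance] Matrix.linftyOpNormedRing Matrix.linftyOpNormedAlgebra

lemma entry_norm_le {N : ℕ} (X : Matrix (Fin N) (Fin N) ℂ) (i j : Fin N) :
    ‖X i j‖ ≤ ‖X‖ := by
  have h1 : ‖X i j‖₊ ≤ ∑ j' : Fin N, ‖X i j'‖₊ :=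
    Finset.single_le_sum (f := fun j' => ‖X i j'‖₊) (fun _ _ => zero_le) (Finset.mem_univ j)
  have h2 : (∑ j' : Fin N, ‖X i j'‖₊) ≤ ‖X‖₊ := by
    rw [Matrix.linfty_opNNNorm_def]
    exact Finset.le_sup (f := fun i => ∑ j' : Fin N, ‖X i j'‖₊) (Finset.mem_univ i)
  exact_mod_cast h1.trans h2

lemma geom_bound {N : ℕ} (M : Matrix (Fin N) (Fin N) ℝ)
    (hspec : ∀ z ∈ spectrum ℂ (M.map (algebraMap ℝ ℂ)), ‖z‖ < 1) :
    ∃ C : ℝ, 1 ≤ C ∧ ∃ q : ℝ, 0 < q ∧ q < 1 ∧ ∀ k, ∀ i j, |((M ^ k) i j)| ≤ C * q ^ k := by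
  set Mc := M.map (algebraMap ℝ ℂ) with hMc
  have hρ : spectralRadius ℂ Mc < 1 := by
    rcases Set.eq_empty_or_nonempty (spectrum ℂ Mc) with h | h
    · simp [spectralRadius, h]
    · have : ∀ z ∈ spectrum ℂ Mc, ‖z‖₊ < (1 : ℝ≥0) := fun z hz => by
        have := hspec z hz; exact_mod_cast this
      simpa using spectrum.spectralRadius_lt_of_forall_lt_of_nonempty h this
  obtain ⟨Q, hQ1, hQ2⟩ := exists_between hρ
  have hQtop : Q ≠ ⊤ := (hQ2.trans_le le_top).ne
  have hQ0 : 0 < Q := lt_of_le_of_lt zero_le hQ1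
  set q : ℝ := Q.toReal with hq
  have hq0 : 0 < q := ENNReal.toReal_pos hQ0.ne' hQtop
  have hq1 : q < 1 := by
    rw [hq, ← ENNReal.toReal_one]
    exact ENNReal.toReal_strict_mono (by simp) hQ2
  have hgel := spectrum.pow_nnnorm_pow_one_div_tendsto_nhds_spectralRadius Mc
  have hev : ∀ᶠ (k : ℕ) in atTop, (‖Mc ^ k‖₊ : ℝ≥0∞) ^ (1 / (k : ℝ)) < Q :=
    hgel.eventually_lt_const hQ1
  obtain ⟨K, hK⟩ := (hev.and (eventually_ge_atTop 1)).exists_forall_of_atTop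
  have hbig : ∀ k ≥ K, ‖Mc ^ k‖ ≤ q ^ k := by
    intro k hk
    obtain ⟨h1, h2⟩ := hK k hk
    have hkR : (0 : ℝ) < (k : ℝ) := by exact_mod_cast h2
    have hx : (‖Mc ^ k‖₊ : ℝ≥0∞) ≤ Q ^ (k : ℝ) := by
      calc (‖Mc ^ k‖₊ : ℝ≥0∞) = ((‖Mc ^ k‖₊ : ℝ≥0∞) ^ (1 / (k:ℝ))) ^ (k:ℝ) := by
            rw [← ENNReal.rpow_mul, one_div, inv_mul_cancel₀ hkR.ne', ENNReal.rpow_one]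
        _ ≤ Q ^ (k:ℝ) := ENNReal.rpow_le_rpow h1.le hkR.le
    rw [ENNReal.rpow_natCast] at hx
    have h3 := ENNReal.toReal_mono (ENNReal.pow_ne_top hQtop) hx
    rwa [ENNReal.coe_toReal, coe_nnnorm, ENNReal.toReal_pow] at h3
  classical
  set C : ℝ := 1 + ∑ k ∈ Finset.range K, ‖Mc ^ k‖ / q ^ k with hC
  have hsum0 : 0 ≤ ∑ k ∈ Finset.range K, ‖Mc ^ k‖ / q ^ k :=
    Finset.sum_nonneg fun k _ => div_nonneg (norm_nonneg _) (pow_nonneg hq0.le _)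
  have hC1 : 1 ≤ C := by simp only [hC]; linarith
  refine ⟨C, hC1, q, hq0, hq1, fun k i j => ?_⟩
  have hmap : Mc ^ k = (M ^ k).map (algebraMap ℝ ℂ) := by
    rw [hMc, ← RingHom.mapMatrix_apply, ← RingHom.mapMatrix_apply, ← map_pow]
  have hentry : |(M ^ k) i j| = ‖(Mc ^ k) i j‖ := by
    rw [hmap, Matrix.map_apply]
    simp [Real.norm_eq_abs]
  rw [hentry]
  refine (entry_norm_le _ i j).trans ?_
  rcases lt_or_ge k K with hkK | hkK
  · have hterm : ‖Mc ^ k‖ / q ^ k ≤ ∑ m ∈ Finset.range K, ‖Mc ^ m‖ / q ^ m :=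
      Finset.single_le_sum (f := fun m => ‖Mc ^ m‖ / q ^ m)
        (fun m _ => div_nonneg (norm_nonneg _) (pow_nonneg hq0.le _))
        (Finset.mem_range.mpr hkK)
    have hqk : 0 < q ^ k := pow_pos hq0 k
    have : ‖Mc ^ k‖ = (‖Mc ^ k‖ / q ^ k) * q ^ k := by field_simp
    rw [this]
    have hCge : ‖Mc ^ k‖ / q ^ k ≤ C := by simp only [hC]; linarith
    exact mul_le_mul_of_nonneg_right hCge hqk.le
  · exact (hbig k hkK).trans (le_mul_of_one_le_left (pow_nonneg hq0.le k) hC1)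

end Spectral


section Kron

variable {n : ℕ}

lemma kronPow_succ (M : Matrix (Fin n) (Fin n) ℝ) (r : ℕ) :
    kronPow M (r + 1) =
      Matrix.reindex (finProdFinEquiv.trans (finCongr (pow_succ n r).symm))
        (finProdFinEquiv.trans (finCongr (pow_succ n r).symm))
        (Matrix.kroneckerMap (· * ·) (kronPow M r) M) := rfl

lemma kronPowVec_succ (v : Fin n → ℝ) (r : ℕ) (i : Fin (n ^ (r + 1))) :
    kronPowVec v (r + 1) i =
      kronPowVec v r ((finProdFinEquiv.trans (finCongr (pow_succ n r).symm)).symm i).1 *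
        v ((finProdFinEquiv.trans (finCongr (pow_succ n r).symm)).symm i).2 := rfl

lemma kronPow_one_eq (r : ℕ) : kronPow (1 : Matrix (Fin n) (Fin n) ℝ) r = 1 := by
  induction r with
  | zero => rfl
  | succ r ih =>
    rw [kronPow_succ, ih, Matrix.one_kronecker_one, Matrix.reindex_apply,
      Matrix.submatrix_one_equiv]

lemma kronPow_mul (M N : Matrix (Fin n) (Fin n) ℝ) (r : ℕ) :
    kronPow (M * N) r = kronPow M r * kronPow N r := by
  induction r with
  | zero => exact (mul_one _).symm
  | succ r ih =>
    rw [kronPow_succ, kronPow_succ, kronPow_succ, ih, Matrix.mul_kronecker_mul,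
      Matrix.reindex_apply, Matrix.reindex_apply, Matrix.reindex_apply,
      Matrix.submatrix_mul_equiv]

lemma kronPowVec_mulVec (M : Matrix (Fin n) (Fin n) ℝ) (v : Fin n → ℝ) (r : ℕ) :
    kronPowVec (M *ᵥ v) r = kronPow M r *ᵥ kronPowVec v r := by
  induction r with
  | zero =>
    funext i
    exact (congrFun (Matrix.one_mulVec (fun _ : Fin (n ^ 0) => (1 : ℝ))) i).symm
  | succ r ih =>
    funext i
    set e := (finProdFinEquiv.trans (finCongr (pow_succ n r).symm)) with he
    rw [kronPowVec_succ, ih]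
    have : (kronPow M (r+1) *ᵥ kronPowVec v (r+1)) i
        = ∑ p : Fin (n ^ r) × Fin n, (kronPow M r ((e.symm i).1) p.1 * M ((e.symm i).2) p.2)
            * (kronPowVec v r p.1 * v p.2) := by
      rw [Matrix.mulVec, dotProduct, ← Equiv.sum_comp e]
      refine Finset.sum_congr rfl fun p _ => ?_
      rw [kronPow_succ, kronPowVec_succ, Matrix.reindex_apply, Matrix.submatrix_apply,
        Equiv.symm_apply_apply]
      rfl
    rw [this, Fintype.sum_prod_type]
    simp only [Matrix.mulVec, dotProduct]
    rw [Finset.sum_mul_sum]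
    refine Finset.sum_congr rfl fun p₁ _ => ?_
    refine Finset.sum_congr rfl fun p₂ _ => ?_
    ring

lemma sum_kronPowVec (v : Fin n → ℝ) (r : ℕ) :
    ∑ i, kronPowVec v r i = (∑ i, v i) ^ r := by
  induction r with
  | zero =>
    exact ((Finset.sum_const (1 : ℝ)).trans (by rw [Finset.card_univ, Fintype.card_fin, pow_zero, one_smul] :
      (Finset.univ : Finset (Fin (n ^ 0))).card • (1 : ℝ) = 1)).trans (pow_zero _).symm
  | succ r ih =>
    set e := (finProdFinEquiv.trans (finCongr (pow_succ n r).symm)) with he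
    rw [← Equiv.sum_comp e]
    have : ∀ p : Fin (n ^ r) × Fin n, kronPowVec v (r+1) (e p) = kronPowVec v r p.1 * v p.2 := by
      intro p; rw [kronPowVec_succ, Equiv.symm_apply_apply]
    rw [Finset.sum_congr rfl fun p _ => this p]
    rw [Fintype.sum_prod_type, ← Finset.sum_mul_sum, ih, pow_succ]

lemma abs_kronPowVec_le (v : Fin n → ℝ) (r : ℕ) (i : Fin (n ^ r)) :
    |kronPowVec v r i| ≤ ‖v‖ ^ r := by
  induction r with
  | zero => simp [kronPowVec]
  | succ r ih =>
    rw [kronPowVec_succ, abs_mul]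
    refine le_trans (mul_le_mul (ih _) ?_ (abs_nonneg _) (pow_nonneg (norm_nonneg _) _))
      (le_of_eq (pow_succ _ _).symm)
    exact (Real.norm_eq_abs _) ▸ norm_le_pi_norm v _

lemma kronPowVec_nonneg {v : Fin n → ℝ} (hv : ∀ i, 0 ≤ v i) (r : ℕ) (i : Fin (n ^ r)) :
    0 ≤ kronPowVec v r i := by
  induction r with
  | zero => norm_num [kronPowVec]
  | succ r ih => rw [kronPowVec_succ]; exact mul_nonneg (ih _) (hv _)

lemma norm_pow_le_sum_kronPowVec {v : Fin n → ℝ} (hv : ∀ i, 0 ≤ v i) (r : ℕ) :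
    ‖v‖ ^ r ≤ ∑ i, kronPowVec v r i := by
  rw [sum_kronPowVec]
  refine pow_le_pow_left₀ (norm_nonneg _) ?_ r
  refine pi_norm_le_iff_of_nonneg (Finset.sum_nonneg fun i _ => hv i) |>.mpr fun i => ?_
  rw [Real.norm_eq_abs, abs_of_nonneg (hv i)]
  exact Finset.single_le_sum (f := fun i => v i) (fun j _ => hv j) (Finset.mem_univ i)

end Kron


section Meas

variable {n a b c : ℕ} {Ω : Type*} [MeasurableSpace Ω]

lemma measurable_entry {f : Ω → Matrix (Fin a) (Fin b) ℝ} (hf : Measurable f)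
    (i : Fin a) (j : Fin b) : Measurable fun ω => f ω i j :=
  (measurable_pi_apply j).comp ((measurable_pi_apply i).comp hf)

lemma measurable_matrix_of_entries {f : Ω → Matrix (Fin a) (Fin b) ℝ}
    (hf : ∀ i j, Measurable fun ω => f ω i j) : Measurable f := by
  refine measurable_pi_iff.mpr fun i => ?_; rw [measurable_pi_iff]; intro j; exact hf i j

lemma Measurable.matrixMul {f : Ω → Matrix (Fin a) (Fin b) ℝ} {g : Ω → Matrix (Fin b) (Fin c) ℝ}
    (hf : Measurable f) (hg : Measurable g) : Measurable fun ω => f ω * g ω := by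
  refine measurable_matrix_of_entries fun i j => ?_
  simp only [Matrix.mul_apply]
  exact Finset.measurable_sum _ fun l _ => (measurable_entry hf i l).mul (measurable_entry hg l j)

lemma Measurable.matrixMulVec {f : Ω → Matrix (Fin a) (Fin b) ℝ} {v : Ω → Fin b → ℝ}
    (hf : Measurable f) (hv : Measurable v) : Measurable fun ω => f ω *ᵥ v ω := by
  rw [measurable_pi_iff]; intro i
  simp only [Matrix.mulVec, dotProduct]
  exact Finset.measurable_sum _ fun l _ =>
    (measurable_entry hf i l).mul ((measurable_pi_apply l).comp hv)

lemma measurable_kronPow (r : ℕ) {f : Ω → Matrix (Fin n) (Fin n) ℝ} (hf : Measurable f) :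
    Measurable fun ω => kronPow (f ω) r := by
  induction r with
  | zero => exact measurable_const
  | succ r ih =>
    refine measurable_matrix_of_entries fun i j => ?_
    simp only [kronPow_succ, Matrix.reindex_apply, Matrix.submatrix_apply,
      Matrix.kroneckerMap_apply]
    exact (measurable_entry ih _ _).mul (measurable_entry hf _ _)

lemma measurable_kronPowVec (r : ℕ) {v : Ω → Fin n → ℝ} (hv : Measurable v) :
    Measurable fun ω => kronPowVec (v ω) r := by
  induction r with
  | zero => exact measurable_const
  | succ r ih =>
    rw [measurable_pi_iff]; intro i
    simp only [kronPowVec_succ]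
    exact ((measurable_pi_apply _).comp ih).mul ((measurable_pi_apply _).comp hv)

lemma measurable_prodA {A : ℤ → Ω → Matrix (Fin n) (Fin n) ℝ}
    (hA : ∀ t, Measurable (A t)) (t : ℤ) (k : ℕ) :
    Measurable fun ω => prodA A t ω k := by
  induction k with
  | zero => exact measurable_const
  | succ k ih => exact ih.matrixMul (hA _)

end Meas

section ProdA

set_option linter.unusedSectionVars false

variable {n : ℕ} {Ω : Type*}

lemma prodA_succ {A : ℤ → Ω → Matrix (Fin n) (Fin n) ℝ} (t : ℤ) (ω : Ω) (k : ℕ) :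
    prodA A t ω (k + 1) = prodA A t ω k * A (t - k) ω := rfl

lemma prodA_succ_left {A : ℤ → Ω → Matrix (Fin n) (Fin n) ℝ} (t : ℤ) (ω : Ω) (k : ℕ) :
    prodA A t ω (k + 1) = A t ω * prodA A (t - 1) ω k := by
  induction k with
  | zero => simp [prodA]
  | succ k ih =>
    have harg : t - ((k + 1 : ℕ) : ℤ) = (t - 1) - (k : ℕ) := by push_cast; ring
    calc prodA A t ω (k + 2) = (A t ω * prodA A (t - 1) ω k) * A (t - ((k + 1 : ℕ) : ℤ)) ω := by
          rw [prodA_succ, ih]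
      _ = A t ω * (prodA A (t - 1) ω k * A ((t - 1) - (k : ℕ)) ω) := by rw [harg, mul_assoc]
      _ = A t ω * prodA A (t - 1) ω (k + 1) := by rw [← prodA_succ]

lemma prodA_zero {A : ℤ → Ω → Matrix (Fin n) (Fin n) ℝ} (t : ℤ) (ω : Ω) :
    prodA A t ω 0 = 1 := rfl

lemma prodA_entry_nonneg {A : ℤ → Ω → Matrix (Fin n) (Fin n) ℝ} {t : ℤ} {ω : Ω}
    (h : ∀ s i j, 0 ≤ A s ω i j) (k : ℕ) : ∀ i j, 0 ≤ prodA A t ω k i j := by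
  induction k with
  | zero =>
    intro i j
    rw [prodA_zero, Matrix.one_apply]
    split <;> norm_num
  | succ k ih =>
    intro i j
    rw [prodA_succ, Matrix.mul_apply]
    exact Finset.sum_nonneg fun l _ => mul_nonneg (ih i l) (h _ l j)

lemma prodA_congr {Ω' : Type*} {A : ℤ → Ω → Matrix (Fin n) (Fin n) ℝ}
    {A' : ℤ → Ω' → Matrix (Fin n) (Fin n) ℝ} {t : ℤ} {ω : Ω} {ω' : Ω'} {k : ℕ}
    (h : ∀ j < k, A (t - j) ω = A' (t - j) ω') : prodA A t ω k = prodA A' t ω' k := by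
  induction k with
  | zero => rfl
  | succ k ih =>
    rw [prodA_succ, prodA_succ, ih fun j hj => h j (hj.trans (Nat.lt_succ_self k)),
      h k (Nat.lt_succ_self k)]

end ProdA


section Tail

lemma ofReal_pow_norm {E : Type*} [NormedAddCommGroup E] (v : E) (r : ℕ) :
    ENNReal.ofReal (‖v‖ ^ r) = (‖v‖₊ : ℝ≥0∞) ^ (r : ℝ) := by
  rw [ENNReal.ofReal_pow (norm_nonneg _), ofReal_norm, enorm_eq_nnnorm, ENNReal.rpow_natCast]

set_option maxHeartbeats 1000000 in

lemma tail_lemma {n : ℕ} {Ω : Type*} [MeasurableSpace Ω] (μ : Measure Ω) [IsProbabilityMeasure μ]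
    (r : ℕ) (hr : 1 ≤ r) (Δ : ℕ → Ω → (Fin n → ℝ))
    (hmeasΔ : ∀ k, AEStronglyMeasurable (Δ k) μ)
    (D q : ℝ) (hD : 0 ≤ D) (hq0 : 0 < q) (hq1 : q < 1)
    (hbound : ∀ k, ∫⁻ ω, (‖Δ k ω‖₊ : ℝ≥0∞) ^ (r : ℝ) ∂μ ≤ ENNReal.ofReal (D * q ^ k)) :
    (∀ᵐ ω ∂μ, Summable fun k => Δ k ω) ∧
      Tendsto (fun N => ∫ ω, ‖(∑ k ∈ Finset.range (N + 1), Δ k ω) - ∑' k, Δ k ω‖ ^ r ∂μ)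
        atTop (𝓝 0) ∧
      Integrable (fun ω => ‖∑' k, Δ k ω‖ ^ r) μ := by
  have hrR : (0 : ℝ) < (r : ℝ) := by exact_mod_cast Nat.lt_of_lt_of_le Nat.zero_lt_one hr
  have hrne : (r : ℝ≥0∞) ≠ 0 := by exact_mod_cast (Nat.pos_of_ne_zero (by omega)).ne'
  have hrtop : (r : ℝ≥0∞) ≠ ⊤ := by simp
  set p : ℝ := q ^ (1 / (r : ℝ)) with hp
  have hp0 : 0 < p := Real.rpow_pos_of_pos hq0 _
  have hp1 : p < 1 := Real.rpow_lt_one hq0.le hq1 (by positivity)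
  set D' : ℝ := (max D 1) ^ (1 / (r : ℝ)) with hD'
  have hD'0 : 0 < D' := Real.rpow_pos_of_pos (lt_of_lt_of_le one_pos (le_max_right _ _)) _
  -- eLpNorm bound
  have key : ∀ k, eLpNorm (Δ k) r μ ≤ ENNReal.ofReal (D' * p ^ k) := by
    intro k
    rw [eLpNorm_eq_lintegral_rpow_enorm_toReal hrne hrtop]
    have h1 : (∫⁻ ω, (‖Δ k ω‖₊ : ℝ≥0∞) ^ (r : ℝ) ∂μ) ^ (1 / (r : ℝ))
        ≤ (ENNReal.ofReal (D * q ^ k)) ^ (1 / (r : ℝ)) :=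
      ENNReal.rpow_le_rpow (hbound k) (by positivity)
    refine h1.trans ?_
    rw [ENNReal.ofReal_rpow_of_nonneg (by positivity) (by positivity)]
    refine ENNReal.ofReal_le_ofReal ?_
    have h2 : (D * q ^ k) ^ (1 / (r : ℝ)) = D ^ (1 / (r : ℝ)) * (q ^ k) ^ (1 / (r : ℝ)) :=
      Real.mul_rpow hD (by positivity)
    rw [h2]
    have h3 : (q ^ k) ^ (1 / (r : ℝ)) = p ^ k := by
      rw [← Real.rpow_natCast q k, ← Real.rpow_mul hq0.le, mul_comm, Real.rpow_mul hq0.le,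
        Real.rpow_natCast]
    rw [h3]
    exact mul_le_mul_of_nonneg_right
      (Real.rpow_le_rpow hD (le_max_left _ _) (by positivity)) (by positivity)
  -- a.e. summability
  have haes : ∀ᵐ ω ∂μ, Summable fun k => Δ k ω := by
    have h1 : ∀ k, ∫⁻ ω, (‖Δ k ω‖₊ : ℝ≥0∞) ∂μ ≤ ENNReal.ofReal (D' * p ^ k) := by
      intro k
      show ∫⁻ ω, ‖Δ k ω‖ₑ ∂μ ≤ _
      rw [← eLpNorm_one_eq_lintegral_enorm]
      exact (eLpNorm_le_eLpNorm_of_exponent_le (by exact_mod_cast Nat.one_le_cast.mpr hr)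
        (hmeasΔ k)).trans (key k)
    have hsumm : Summable fun k : ℕ => D' * p ^ k :=
      (summable_geometric_of_lt_one hp0.le hp1).mul_left _
    have h2 : ∫⁻ ω, ∑' k, (‖Δ k ω‖₊ : ℝ≥0∞) ∂μ ≠ ⊤ := by
      show ∫⁻ ω, ∑' k, ‖Δ k ω‖ₑ ∂μ ≠ ⊤
      rw [lintegral_tsum fun k => (hmeasΔ k).enorm]
      refine ne_top_of_le_ne_top ?_ (ENNReal.tsum_le_tsum h1)
      rw [← ENNReal.ofReal_tsum_of_nonneg (fun k => by positivity) hsumm]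
      exact ENNReal.ofReal_ne_top
    have h3 : ∀ᵐ ω ∂μ, ∑' k, (‖Δ k ω‖₊ : ℝ≥0∞) < ⊤ :=
      ae_lt_top' (AEMeasurable.ennreal_tsum fun k => (hmeasΔ k).enorm) h2
    filter_upwards [h3] with ω hω
    exact Summable.of_nnnorm (ENNReal.tsum_coe_ne_top_iff_summable.mp hω.ne)
  set Y : Ω → Fin n → ℝ := fun ω => ∑' k, Δ k ω with hY
  set S : ℕ → Ω → Fin n → ℝ := fun N ω => ∑ k ∈ Finset.range (N + 1), Δ k ω with hS
  have hSmeas : ∀ N, AEStronglyMeasurable (S N) μ := fun N =>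
    Finset.aestronglyMeasurable_fun_sum _ fun k _ => hmeasΔ k
  have hStend : ∀ᵐ ω ∂μ, Tendsto (fun N => S N ω) atTop (𝓝 (Y ω)) := by
    filter_upwards [haes] with ω hω
    exact hω.hasSum.tendsto_sum_nat.comp (tendsto_add_atTop_nat 1)
  have hYmeas : AEStronglyMeasurable Y μ := aestronglyMeasurable_of_tendsto_ae atTop hSmeas hStend
  -- eLpNorm of partial-sum differences
  have hdiff : ∀ N M : ℕ, N ≤ M →
      eLpNorm (fun ω => S N ω - S M ω) r μ
        ≤ ENNReal.ofReal (D' * p ^ (N + 1) * (1 - p)⁻¹) := by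
    intro N M hNM
    have heq : ∀ ω, S M ω - S N ω = ∑ k ∈ Finset.Ico (N + 1) (M + 1), Δ k ω := by
      intro ω
      rw [Finset.sum_Ico_eq_sub _ (by omega : N + 1 ≤ M + 1)]
    have h1 : eLpNorm (fun ω => S N ω - S M ω) r μ
        = eLpNorm (∑ k ∈ Finset.Ico (N + 1) (M + 1), Δ k) r μ := by
      rw [show (fun ω => S N ω - S M ω) = -(fun ω => S M ω - S N ω) by funext ω; simp,
        eLpNorm_neg]
      refine eLpNorm_congr_ae (.of_forall fun ω => ?_)
      rw [Finset.sum_apply]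
      exact heq ω
    rw [h1]
    refine (eLpNorm_sum_le (fun k _ => hmeasΔ k) (by exact_mod_cast Nat.one_le_cast.mpr hr)).trans ?_
    refine le_trans (Finset.sum_le_sum fun k _ => key k) ?_
    rw [← ENNReal.ofReal_sum_of_nonneg (fun k _ => by positivity)]
    refine ENNReal.ofReal_le_ofReal ?_
    rw [← Finset.mul_sum]
    rw [Finset.sum_Ico_eq_sum_range]
    have h2 : ∑ k ∈ Finset.range (M + 1 - (N + 1)), p ^ (N + 1 + k)
        = p ^ (N + 1) * ∑ k ∈ Finset.range (M + 1 - (N + 1)), p ^ k := by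
      rw [Finset.mul_sum]
      exact Finset.sum_congr rfl fun k _ => by rw [pow_add]
    rw [h2, ← mul_assoc]
    refine mul_le_mul_of_nonneg_left ?_ (by positivity)
    refine le_trans (Summable.sum_le_tsum _ (fun k _ => by positivity)
      (summable_geometric_of_lt_one hp0.le hp1)) ?_
    rw [tsum_geometric_of_lt_one hp0.le hp1]
  -- lintegral tail bound via Fatou
  have hmain : ∀ N, ∫⁻ ω, (‖S N ω - Y ω‖₊ : ℝ≥0∞) ^ (r : ℝ) ∂μ
      ≤ (ENNReal.ofReal (D' * p ^ (N + 1) * (1 - p)⁻¹)) ^ (r : ℝ) := by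
    intro N
    have hptw : ∀ᵐ ω ∂μ, Tendsto (fun M => (‖S N ω - S M ω‖₊ : ℝ≥0∞) ^ (r : ℝ)) atTop
        (𝓝 ((‖S N ω - Y ω‖₊ : ℝ≥0∞) ^ (r : ℝ))) := by
      filter_upwards [hStend] with ω hω
      have h1 : Tendsto (fun M => S N ω - S M ω) atTop (𝓝 (S N ω - Y ω)) :=
        tendsto_const_nhds.sub hω
      have h2 : Tendsto (fun M => (‖S N ω - S M ω‖₊ : ℝ≥0∞)) atTop
          (𝓝 ((‖S N ω - Y ω‖₊ : ℝ≥0∞))) :=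
        (ENNReal.continuous_coe.tendsto _).comp ((continuous_nnnorm.tendsto _).comp h1)
      exact (ENNReal.continuous_rpow_const.tendsto _).comp h2
    have heqlim : ∫⁻ ω, (‖S N ω - Y ω‖₊ : ℝ≥0∞) ^ (r : ℝ) ∂μ
        = ∫⁻ ω, liminf (fun M => (‖S N ω - S M ω‖₊ : ℝ≥0∞) ^ (r : ℝ)) atTop ∂μ := by
      refine lintegral_congr_ae ?_
      filter_upwards [hptw] with ω hω
      exact (hω.liminf_eq).symm
    rw [heqlim]
    refine le_trans (lintegral_liminf_le' fun M =>
      (((hSmeas N).sub (hSmeas M)).enorm.pow_const _)) ?_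
    have hev : ∀ᶠ M in atTop, ∫⁻ ω, (‖S N ω - S M ω‖₊ : ℝ≥0∞) ^ (r : ℝ) ∂μ
        ≤ (ENNReal.ofReal (D' * p ^ (N + 1) * (1 - p)⁻¹)) ^ (r : ℝ) := by
      filter_upwards [eventually_ge_atTop N] with M hM
      have h3 : ∫⁻ ω, (‖S N ω - S M ω‖₊ : ℝ≥0∞) ^ (r : ℝ) ∂μ
          = (eLpNorm (fun ω => S N ω - S M ω) r μ) ^ (r : ℝ) := by
        rw [eLpNorm_eq_lintegral_rpow_enorm_toReal hrne hrtop, ENNReal.toReal_natCast,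
          ← ENNReal.rpow_mul, one_div, inv_mul_cancel₀ hrR.ne', ENNReal.rpow_one]; rfl
      rw [h3]
      exact ENNReal.rpow_le_rpow (hdiff N M hM) hrR.le
    calc liminf (fun M => ∫⁻ ω, (‖S N ω - S M ω‖₊ : ℝ≥0∞) ^ (r : ℝ) ∂μ) atTop
        ≤ liminf (fun _ : ℕ => (ENNReal.ofReal (D' * p ^ (N + 1) * (1 - p)⁻¹)) ^ (r : ℝ)) atTop :=
          liminf_le_liminf hev
      _ = _ := liminf_const _
  constructor
  · exact haes
  constructor
  · -- L^r convergence
    have hval : ∀ N, ∫ ω, ‖S N ω - Y ω‖ ^ r ∂μ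
        = (∫⁻ ω, (‖S N ω - Y ω‖₊ : ℝ≥0∞) ^ (r : ℝ) ∂μ).toReal := by
      intro N
      have h0 : AEStronglyMeasurable (fun ω => S N ω - Y ω) μ := (hSmeas N).sub hYmeas
      have hA : AEStronglyMeasurable (fun ω => ‖S N ω - Y ω‖ ^ r) μ :=
        (continuous_pow r).comp_aestronglyMeasurable h0.norm
      rw [integral_eq_lintegral_of_nonneg_ae (.of_forall fun ω => by positivity) hA]
      congr 1
      exact lintegral_congr fun ω => ofReal_pow_norm _ r
    have hle : ∀ N, ∫ ω, ‖S N ω - Y ω‖ ^ r ∂μ ≤ (D' * p ^ (N + 1) * (1 - p)⁻¹) ^ r := by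
      intro N
      rw [hval N]
      have hEnn : 0 ≤ D' * p ^ (N + 1) * (1 - p)⁻¹ :=
        mul_nonneg (mul_nonneg hD'0.le (pow_nonneg hp0.le _)) (inv_nonneg.mpr (by linarith))
      have hpowEq : (ENNReal.ofReal (D' * p ^ (N + 1) * (1 - p)⁻¹)) ^ (r : ℝ)
          = ENNReal.ofReal ((D' * p ^ (N + 1) * (1 - p)⁻¹) ^ r) := by
        rw [ENNReal.ofReal_rpow_of_nonneg hEnn hrR.le, Real.rpow_natCast]
      have h4 := ENNReal.toReal_mono (by rw [hpowEq]; exact ENNReal.ofReal_ne_top) (hmain N)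
      rw [hpowEq, ENNReal.toReal_ofReal (pow_nonneg hEnn r)] at h4
      exact h4
    have hnn : ∀ N, 0 ≤ ∫ ω, ‖S N ω - Y ω‖ ^ r ∂μ := fun N =>
      integral_nonneg fun ω => by positivity
    have htendE : Tendsto (fun N => (D' * p ^ (N + 1) * (1 - p)⁻¹) ^ r) atTop (𝓝 0) := by
      have h1 : Tendsto (fun N : ℕ => D' * p ^ (N + 1) * (1 - p)⁻¹) atTop (𝓝 0) := by
        have h2 : Tendsto (fun N : ℕ => p ^ (N + 1)) atTop (𝓝 0) :=
          (tendsto_pow_atTop_nhds_zero_of_lt_one hp0.le hp1).comp (tendsto_add_atTop_nat 1)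
        have := (h2.const_mul D').mul_const (1 - p)⁻¹
        simpa using this
      have := h1.pow r
      simpa [zero_pow (by omega : r ≠ 0)] using this
    exact squeeze_zero hnn hle htendE
  · -- integrability of the limit
    have hSbound : ∀ M, eLpNorm (S M) r μ ≤ ENNReal.ofReal (D' * (1 - p)⁻¹) := by
      intro M
      have hSM : S M = ∑ k ∈ Finset.range (M + 1), Δ k :=
        funext fun ω => by rw [Finset.sum_apply]
      rw [hSM]
      refine (eLpNorm_sum_le (fun k _ => hmeasΔ k)
        (by exact_mod_cast Nat.one_le_cast.mpr hr)).trans ?_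
      refine le_trans (Finset.sum_le_sum fun k _ => key k) ?_
      rw [← ENNReal.ofReal_sum_of_nonneg (fun k _ => by positivity)]
      refine ENNReal.ofReal_le_ofReal ?_
      rw [← Finset.mul_sum]
      refine mul_le_mul_of_nonneg_left ?_ hD'0.le
      refine le_trans (Summable.sum_le_tsum _ (fun k _ => by positivity)
        (summable_geometric_of_lt_one hp0.le hp1)) ?_
      rw [tsum_geometric_of_lt_one hp0.le hp1]
    have hYlint : ∫⁻ ω, (‖Y ω‖₊ : ℝ≥0∞) ^ (r : ℝ) ∂μ
        ≤ (ENNReal.ofReal (D' * (1 - p)⁻¹)) ^ (r : ℝ) := by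
      have hptw : ∀ᵐ ω ∂μ, Tendsto (fun M => (‖S M ω‖₊ : ℝ≥0∞) ^ (r : ℝ)) atTop
          (𝓝 ((‖Y ω‖₊ : ℝ≥0∞) ^ (r : ℝ))) := by
        filter_upwards [hStend] with ω hω
        exact (ENNReal.continuous_rpow_const.tendsto _).comp
          ((ENNReal.continuous_coe.tendsto _).comp ((continuous_nnnorm.tendsto _).comp hω))
      have heqlim : ∫⁻ ω, (‖Y ω‖₊ : ℝ≥0∞) ^ (r : ℝ) ∂μ
          = ∫⁻ ω, liminf (fun M => (‖S M ω‖₊ : ℝ≥0∞) ^ (r : ℝ)) atTop ∂μ := by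
        refine lintegral_congr_ae ?_
        filter_upwards [hptw] with ω hω
        exact (hω.liminf_eq).symm
      rw [heqlim]
      refine le_trans (lintegral_liminf_le' fun M => ((hSmeas M).enorm.pow_const _)) ?_
      have hev : ∀ᶠ M in atTop, ∫⁻ ω, (‖S M ω‖₊ : ℝ≥0∞) ^ (r : ℝ) ∂μ
          ≤ (ENNReal.ofReal (D' * (1 - p)⁻¹)) ^ (r : ℝ) := by
        refine Eventually.of_forall fun M => ?_
        have h3 : ∫⁻ ω, (‖S M ω‖₊ : ℝ≥0∞) ^ (r : ℝ) ∂μ = (eLpNorm (S M) r μ) ^ (r : ℝ) := by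
          rw [eLpNorm_eq_lintegral_rpow_enorm_toReal hrne hrtop, ENNReal.toReal_natCast,
            ← ENNReal.rpow_mul, one_div, inv_mul_cancel₀ hrR.ne', ENNReal.rpow_one]; rfl
        rw [h3]
        exact ENNReal.rpow_le_rpow (hSbound M) hrR.le
      calc liminf (fun M => ∫⁻ ω, (‖S M ω‖₊ : ℝ≥0∞) ^ (r : ℝ) ∂μ) atTop
          ≤ liminf (fun _ : ℕ => (ENNReal.ofReal (D' * (1 - p)⁻¹)) ^ (r : ℝ)) atTop :=
            liminf_le_liminf hev
        _ = _ := liminf_const _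
    refine ⟨(continuous_pow r).comp_aestronglyMeasurable hYmeas.norm, ?_⟩
    show ∫⁻ ω, (‖(‖Y ω‖ ^ r : ℝ)‖₊ : ℝ≥0∞) ∂μ < ⊤
    have heq2 : ∀ ω, (‖(‖Y ω‖ ^ r : ℝ)‖₊ : ℝ≥0∞) = (‖Y ω‖₊ : ℝ≥0∞) ^ (r : ℝ) := by
      intro ω
      rw [nnnorm_pow, nnnorm_norm, ENNReal.coe_pow, ← ENNReal.rpow_natCast]
    rw [lintegral_congr fun ω => heq2 ω]
    have hnn2 : 0 ≤ D' * (1 - p)⁻¹ := mul_nonneg hD'0.le (inv_nonneg.mpr (by linarith))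
    exact lt_of_le_of_lt hYlint (by
      rw [ENNReal.ofReal_rpow_of_nonneg hnn2 hrR.le]
      exact ENNReal.ofReal_lt_top)

end Tail


/-- **Higher-moment sufficiency via Kronecker powers.** If
`ρ(E[A₀^{⊗r}]) < 1` and `E[‖B₀‖^r] < ∞` (with the usual i.i.d./independence structure and
nonnegativity), then the partial sums `S_N(t) = B_t + ∑_{k=1}^N A_t ⋯ A_{t-k+1} B_{t-k}`
converge in `Lʳ` and almost surely to a limit `Y_t` with `E[‖Y_t‖^r] < ∞` satisfying
`Y_t = A_t Y_{t-1} + B_t`. -/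
theorem stmt18 {n : ℕ} {Ω : Type*} [MeasurableSpace Ω] (μ : Measure Ω) [IsProbabilityMeasure μ]
    (A : ℤ → Ω → Matrix (Fin n) (Fin n) ℝ) (B : ℤ → Ω → Fin n → ℝ) (r : ℕ) (hr : 1 ≤ r)
    (hmeas : ∀ t, Measurable fun ω => (A t ω, B t ω))
    (hindep : iIndepFun (fun t ω => (A t ω, B t ω)) μ)
    (hident : ∀ t, Measure.map (fun ω => (A t ω, B t ω)) μ
      = Measure.map (fun ω => (A 0 ω, B 0 ω)) μ)
    (hApos : ∀ t, ∀ᵐ ω ∂μ, ∀ i j, 0 ≤ A t ω i j)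
    (hBpos : ∀ t, ∀ᵐ ω ∂μ, ∀ i, 0 ≤ B t ω i)
    (hAkronInt : ∀ i j, Integrable (fun ω => kronPow (A 0 ω) r i j) μ)
    (hBrInt : Integrable (fun ω => ‖B 0 ω‖ ^ r) μ)
    (hspec : ∀ z ∈ spectrum ℂ
      ((Matrix.of fun i j => ∫ ω, kronPow (A 0 ω) r i j ∂μ).map (algebraMap ℝ ℂ)), ‖z‖ < 1) :
    ∀ t : ℤ,
      (∀ᵐ ω ∂μ, Summable fun k => prodA A t ω k *ᵥ B (t - k) ω) ∧
      Tendsto (fun N => ∫ ω, ‖(∑ k ∈ Finset.range (N + 1), prodA A t ω k *ᵥ B (t - k) ω) -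
          ∑' k, prodA A t ω k *ᵥ B (t - k) ω‖ ^ r ∂μ) atTop (𝓝 0) ∧
      Integrable (fun ω => ‖∑' k, prodA A t ω k *ᵥ B (t - k) ω‖ ^ r) μ ∧
      (∀ᵐ ω ∂μ, (∑' k, prodA A t ω k *ᵥ B (t - k) ω)
        = A t ω *ᵥ (∑' k, prodA A (t - 1) ω k *ᵥ B (t - 1 - k) ω) + B t ω) := by
  classical
  have hAmeas : ∀ s, Measurable (A s) := fun s => measurable_fst.comp (hmeas s)
  have hBmeas : ∀ s, Measurable (B s) := fun s => measurable_snd.comp (hmeas s)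
  set M : Matrix (Fin (n ^ r)) (Fin (n ^ r)) ℝ :=
    Matrix.of fun i j => ∫ ω, kronPow (A 0 ω) r i j ∂μ with hMdef
  set bbar : Fin (n ^ r) → ℝ := fun j => ∫ ω, kronPowVec (B 0 ω) r j ∂μ with hbbar
  obtain ⟨C, hC1, q, hq0, hq1, hCq⟩ := geom_bound M hspec
  -- distribution transfer
  have htransInt : ∀ (s : ℤ) (g : Matrix (Fin n) (Fin n) ℝ × (Fin n → ℝ) → ℝ), Measurable g →
      Integrable (fun ω => g (A 0 ω, B 0 ω)) μ → Integrable (fun ω => g (A s ω, B s ω)) μ := by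
    intro s g hg h0
    have h1 : Integrable g (Measure.map (fun ω => (A s ω, B s ω)) μ) := by
      rw [hident s]
      exact (integrable_map_measure hg.aestronglyMeasurable (hmeas 0).aemeasurable).mpr h0
    exact (integrable_map_measure hg.aestronglyMeasurable (hmeas s).aemeasurable).mp h1
  have htransEq : ∀ (s : ℤ) (g : Matrix (Fin n) (Fin n) ℝ × (Fin n → ℝ) → ℝ), Measurable g →
      ∫ ω, g (A s ω, B s ω) ∂μ = ∫ ω, g (A 0 ω, B 0 ω) ∂μ := by
    intro s g hg
    rw [← integral_map (hmeas s).aemeasurable hg.aestronglyMeasurable, hident s,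
      integral_map (hmeas 0).aemeasurable hg.aestronglyMeasurable]
  -- independence of the product block from time t - k
  have hIndep : ∀ (t : ℤ) (k : ℕ), IndepFun (fun ω => prodA A t ω k)
      (fun ω => (A (t - k) ω, B (t - k) ω)) μ := by
    intro t k
    set S : Finset ℤ := (Finset.range k).image (fun j => t - (j : ℕ)) with hSdef
    have hmemS : ∀ j, j < k → t - (j : ℕ) ∈ S := fun j hj =>
      Finset.mem_image.mpr ⟨j, Finset.mem_range.mpr hj, rfl⟩
    have hd : Disjoint S {t - (k : ℕ)} := by
      rw [Finset.disjoint_singleton_right]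
      intro hmem
      obtain ⟨j, hj, hje⟩ := Finset.mem_image.mp hmem
      rw [Finset.mem_range] at hj
      omega
    have base := hindep.indepFun_finset S {t - (k : ℕ)} hd hmeas
    have hφ : Measurable (fun g : ((i : S) → Matrix (Fin n) (Fin n) ℝ × (Fin n → ℝ)) =>
        prodA (fun s g' => if h : s ∈ S then (g' ⟨s, h⟩).1 else 0) t g k) := by
      refine measurable_prodA (fun s => ?_) t k
      by_cases h : s ∈ S
      · simp only [dif_pos h]
        exact measurable_fst.comp (measurable_pi_apply _)
      · simp only [dif_neg h]
        exact measurable_const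
    have hψ : Measurable (fun g : ((i : ({t - (k : ℕ)} : Finset ℤ)) →
        Matrix (Fin n) (Fin n) ℝ × (Fin n → ℝ)) =>
        g ⟨t - (k : ℕ), Finset.mem_singleton_self _⟩) := measurable_pi_apply _
    have hcomp := base.comp hφ hψ
    simp only [Function.comp_def] at hcomp
    have heq1 : (fun ω => prodA (fun s g' => if h : s ∈ S then (g' ⟨s, h⟩).1 else 0) t
        (fun i : S => (A (i : ℤ) ω, B (i : ℤ) ω)) k) = fun ω => prodA A t ω k := by
      funext ω
      exact (prodA_congr fun j hj => by rw [dif_pos (hmemS j hj)]).symm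
    rw [heq1] at hcomp
    exact hcomp
  -- moments of the Kronecker power of the product
  have hG : ∀ (t : ℤ) (k : ℕ),
      (∀ i j, Integrable (fun ω => kronPow (prodA A t ω k) r i j) μ) ∧
      (∀ i j, ∫ ω, kronPow (prodA A t ω k) r i j ∂μ = (M ^ k) i j) := by
    intro t k
    induction k with
    | zero =>
      constructor
      · intro i j
        have : (fun ω => kronPow (prodA A t ω 0) r i j)
            = fun _ => (1 : Matrix (Fin (n ^ r)) (Fin (n ^ r)) ℝ) i j := by
          funext ω; rw [prodA_zero, kronPow_one_eq]
        rw [this]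
        exact integrable_const _
      · intro i j
        have : (fun ω => kronPow (prodA A t ω 0) r i j)
            = fun _ => (1 : Matrix (Fin (n ^ r)) (Fin (n ^ r)) ℝ) i j := by
          funext ω; rw [prodA_zero, kronPow_one_eq]
        rw [this, pow_zero]
        simp [measure_univ]
    | succ k ih =>
      have hKmeas : ∀ l j', Measurable fun x : Matrix (Fin n) (Fin n) ℝ × (Fin n → ℝ) =>
          kronPow x.1 r l j' := fun l j' =>
        measurable_entry (measurable_kronPow r measurable_fst) l j'
      have hKInt : ∀ l j', Integrable (fun ω => kronPow (A (t - k) ω) r l j') μ := fun l j' =>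
        htransInt (t - k) _ (hKmeas l j') (hAkronInt l j')
      have hKEq : ∀ l j', ∫ ω, kronPow (A (t - k) ω) r l j' ∂μ = M l j' := fun l j' =>
        htransEq (t - k) _ (hKmeas l j')
      have hind : ∀ i l j', IndepFun (fun ω => kronPow (prodA A t ω k) r i l)
          (fun ω => kronPow (A (t - k) ω) r l j') μ := fun i l j' =>
        (hIndep t k).comp (measurable_entry (measurable_kronPow r measurable_id) i l)
          (hKmeas l j')
      have hsplit : ∀ i j, (fun ω => kronPow (prodA A t ω (k + 1)) r i j)
          = fun ω => ∑ l, kronPow (prodA A t ω k) r i l * kronPow (A (t - k) ω) r l j := by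
        intro i j
        funext ω
        rw [prodA_succ, kronPow_mul, Matrix.mul_apply]
      have hprodInt : ∀ i j l, Integrable
          (fun ω => kronPow (prodA A t ω k) r i l * kronPow (A (t - k) ω) r l j) μ :=
        fun i j l => (hind i l j).integrable_mul (ih.1 i l) (hKInt l j)
      constructor
      · intro i j
        rw [hsplit i j]
        exact integrable_finset_sum _ fun l _ => hprodInt i j l
      · intro i j
        rw [hsplit i j, integral_finset_sum _ fun l _ => hprodInt i j l]
        have hPE : ∀ l, ∫ ω, kronPow (prodA A t ω k) r i l * kronPow (A (t - k) ω) r l j ∂μ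
            = (M ^ k) i l * M l j := by
          intro l
          have h5 := (hind i l j).integral_fun_mul_eq_mul_integral (ih.1 i l).1 (hKInt l j).1
          rw [ih.2 i l, hKEq l j] at h5
          exact h5
        rw [Finset.sum_congr rfl fun l _ => hPE l, pow_succ, Matrix.mul_apply]
  -- moments of the full Kronecker-power summand
  have hW : ∀ (t : ℤ) (k : ℕ),
      (∀ i, Integrable
        (fun ω => (kronPow (prodA A t ω k) r *ᵥ kronPowVec (B (t - k) ω) r) i) μ) ∧
      (∀ i, ∫ ω, (kronPow (prodA A t ω k) r *ᵥ kronPowVec (B (t - k) ω) r) i ∂μ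
        = ((M ^ k) *ᵥ bbar) i) := by
    intro t k
    have hVmeas : ∀ j, Measurable fun x : Matrix (Fin n) (Fin n) ℝ × (Fin n → ℝ) =>
        kronPowVec x.2 r j := fun j =>
      (measurable_pi_apply j).comp (measurable_kronPowVec r measurable_snd)
    have hVInt0 : ∀ j, Integrable (fun ω => kronPowVec (B 0 ω) r j) μ := fun j => by
      refine Integrable.mono' hBrInt ((hVmeas j).comp (hmeas 0)).aestronglyMeasurable ?_
      refine Eventually.of_forall fun ω => ?_
      rw [Real.norm_eq_abs]
      exact abs_kronPowVec_le _ _ _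
    have hVInt : ∀ j, Integrable (fun ω => kronPowVec (B (t - k) ω) r j) μ := fun j =>
      htransInt (t - k) _ (hVmeas j) (hVInt0 j)
    have hVEq : ∀ j, ∫ ω, kronPowVec (B (t - k) ω) r j ∂μ = bbar j := fun j =>
      htransEq (t - k) _ (hVmeas j)
    have hind : ∀ i j, IndepFun (fun ω => kronPow (prodA A t ω k) r i j)
        (fun ω => kronPowVec (B (t - k) ω) r j) μ := fun i j =>
      (hIndep t k).comp (measurable_entry (measurable_kronPow r measurable_id) i j) (hVmeas j)
    have hsplit : ∀ i, (fun ω => (kronPow (prodA A t ω k) r *ᵥ kronPowVec (B (t - k) ω) r) i)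
        = fun ω => ∑ j, kronPow (prodA A t ω k) r i j * kronPowVec (B (t - k) ω) r j := by
      intro i
      funext ω
      rw [Matrix.mulVec, dotProduct]
    have hprodInt : ∀ i j, Integrable
        (fun ω => kronPow (prodA A t ω k) r i j * kronPowVec (B (t - k) ω) r j) μ :=
      fun i j => (hind i j).integrable_mul ((hG t k).1 i j) (hVInt j)
    constructor
    · intro i
      rw [hsplit i]
      exact integrable_finset_sum _ fun j _ => hprodInt i j
    · intro i
      rw [hsplit i, integral_finset_sum _ fun j _ => hprodInt i j]
      have hPE : ∀ j, ∫ ω, kronPow (prodA A t ω k) r i j * kronPowVec (B (t - k) ω) r j ∂μ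
          = (M ^ k) i j * bbar j := by
        intro j
        have h5 := (hind i j).integral_fun_mul_eq_mul_integral ((hG t k).1 i j).1 (hVInt j).1
        rw [(hG t k).2 i j, hVEq j] at h5
        exact h5
      rw [Finset.sum_congr rfl fun j _ => hPE j, Matrix.mulVec, dotProduct]
  -- a.e. nonnegativity
  have hpos : ∀ᵐ ω ∂μ, ∀ s : ℤ, (∀ i j, 0 ≤ A s ω i j) ∧ (∀ i, 0 ≤ B s ω i) := by
    rw [ae_all_iff]
    exact fun s => (hApos s).and (hBpos s)
  -- the moment bound for the summands
  set D : ℝ := (n ^ r : ℝ) * (C * ∑ j, |bbar j|) with hDdef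
  have hD : 0 ≤ D := by positivity
  have hΔmeas : ∀ (t : ℤ) (k : ℕ), Measurable fun ω => prodA A t ω k *ᵥ B (t - k) ω :=
    fun t k => (measurable_prodA hAmeas t k).matrixMulVec (hBmeas _)
  have hmom : ∀ (t : ℤ) (k : ℕ),
      Integrable (fun ω => ‖prodA A t ω k *ᵥ B (t - k) ω‖ ^ r) μ ∧
      ∫ ω, ‖prodA A t ω k *ᵥ B (t - k) ω‖ ^ r ∂μ ≤ D * q ^ k := by
    intro t k
    have hb : ∀ᵐ ω ∂μ, ‖prodA A t ω k *ᵥ B (t - k) ω‖ ^ r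
        ≤ ∑ i, (kronPow (prodA A t ω k) r *ᵥ kronPowVec (B (t - k) ω) r) i := by
      filter_upwards [hpos] with ω hω
      have hΔnn : ∀ i, 0 ≤ (prodA A t ω k *ᵥ B (t - k) ω) i := by
        intro i
        rw [Matrix.mulVec, dotProduct]
        exact Finset.sum_nonneg fun j _ =>
          mul_nonneg (prodA_entry_nonneg (fun s i j => (hω s).1 i j) k i j) ((hω _).2 j)
      have h1 := norm_pow_le_sum_kronPowVec hΔnn r
      rwa [kronPowVec_mulVec] at h1
    have hsumInt : Integrable
        (fun ω => ∑ i, (kronPow (prodA A t ω k) r *ᵥ kronPowVec (B (t - k) ω) r) i) μ :=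
      integrable_finset_sum _ fun i _ => (hW t k).1 i
    have hint : Integrable (fun ω => ‖prodA A t ω k *ᵥ B (t - k) ω‖ ^ r) μ := by
      refine Integrable.mono' hsumInt ?_ ?_
      · exact ((continuous_pow r).comp_aestronglyMeasurable
          (hΔmeas t k).aestronglyMeasurable.norm)
      · filter_upwards [hb] with ω hω
        calc ‖(‖prodA A t ω k *ᵥ B (t - k) ω‖ ^ r : ℝ)‖
            = ‖prodA A t ω k *ᵥ B (t - k) ω‖ ^ r := by
              rw [Real.norm_eq_abs, abs_of_nonneg (by positivity)]
          _ ≤ _ := hω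
    refine ⟨hint, ?_⟩
    have h2 : ∫ ω, ‖prodA A t ω k *ᵥ B (t - k) ω‖ ^ r ∂μ
        ≤ ∫ ω, ∑ i, (kronPow (prodA A t ω k) r *ᵥ kronPowVec (B (t - k) ω) r) i ∂μ :=
      integral_mono_ae hint hsumInt hb
    refine h2.trans ?_
    rw [integral_finset_sum _ fun i _ => (hW t k).1 i,
      Finset.sum_congr rfl fun i _ => (hW t k).2 i]
    have h3 : ∀ i : Fin (n ^ r), ((M ^ k) *ᵥ bbar) i ≤ C * q ^ k * ∑ j, |bbar j| := by
      intro i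
      rw [Matrix.mulVec, dotProduct]
      calc ∑ j, (M ^ k) i j * bbar j ≤ ∑ j, C * q ^ k * |bbar j| := by
            refine Finset.sum_le_sum fun j _ => ?_
            calc (M ^ k) i j * bbar j ≤ |(M ^ k) i j * bbar j| := le_abs_self _
              _ = |(M ^ k) i j| * |bbar j| := abs_mul _ _
              _ ≤ C * q ^ k * |bbar j| :=
                  mul_le_mul_of_nonneg_right (hCq k i j) (abs_nonneg _)
        _ = C * q ^ k * ∑ j, |bbar j| := by rw [← Finset.mul_sum]
    calc ∑ i, ((M ^ k) *ᵥ bbar) i ≤ ∑ _i : Fin (n ^ r), C * q ^ k * ∑ j, |bbar j| :=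
          Finset.sum_le_sum fun i _ => h3 i
      _ = (n ^ r : ℝ) * (C * q ^ k * ∑ j, |bbar j|) := by
          rw [Finset.sum_const, Finset.card_univ, Fintype.card_fin, nsmul_eq_mul]
          push_cast
          ring
      _ = D * q ^ k := by rw [hDdef]; ring
  -- lintegral version of the moment bound
  have hlint : ∀ (t : ℤ) (k : ℕ),
      ∫⁻ ω, (‖prodA A t ω k *ᵥ B (t - k) ω‖₊ : ℝ≥0∞) ^ (r : ℝ) ∂μ
        ≤ ENNReal.ofReal (D * q ^ k) := by
    intro t k
    have h1 : ∫⁻ ω, (‖prodA A t ω k *ᵥ B (t - k) ω‖₊ : ℝ≥0∞) ^ (r : ℝ) ∂μ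
        = ENNReal.ofReal (∫ ω, ‖prodA A t ω k *ᵥ B (t - k) ω‖ ^ r ∂μ) := by
      rw [ofReal_integral_eq_lintegral_ofReal (hmom t k).1
        (Eventually.of_forall fun ω => by positivity)]
      exact lintegral_congr fun ω => (ofReal_pow_norm _ r).symm
    rw [h1]
    exact ENNReal.ofReal_le_ofReal ((hmom t k).2)
  -- apply the tail lemma
  have htail := fun t : ℤ => tail_lemma μ r hr (fun k ω => prodA A t ω k *ᵥ B (t - k) ω)
    (fun k => (hΔmeas t k).aestronglyMeasurable) D q hD hq0 hq1 (hlint t)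
  intro t
  refine ⟨(htail t).1, (htail t).2.1, (htail t).2.2, ?_⟩
  filter_upwards [(htail t).1, (htail (t - 1)).1] with ω hsum_t hsum_t1
  have hzero : prodA A t ω 0 *ᵥ B (t - ((0 : ℕ) : ℤ)) ω = B t ω := by
    rw [prodA_zero, Matrix.one_mulVec]
    norm_num
  have hstep : ∀ k : ℕ, prodA A t ω (k + 1) *ᵥ B (t - ((k + 1 : ℕ) : ℤ)) ω
      = A t ω *ᵥ (prodA A (t - 1) ω k *ᵥ B (t - 1 - (k : ℕ)) ω) := by
    intro k
    have hidx : t - ((k + 1 : ℕ) : ℤ) = t - 1 - (k : ℕ) := by push_cast; ring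
    rw [prodA_succ_left, ← Matrix.mulVec_mulVec, hidx]
  rw [Summable.tsum_eq_zero_add hsum_t, hzero]
  have h4 : ∑' k : ℕ, prodA A t ω (k + 1) *ᵥ B (t - ((k + 1 : ℕ) : ℤ)) ω
      = A t ω *ᵥ ∑' k : ℕ, prodA A (t - 1) ω k *ᵥ B (t - 1 - (k : ℕ)) ω := by
    rw [tsum_congr hstep]
    exact ((Matrix.mulVecLin (A t ω)).toContinuousLinearMap.map_tsum hsum_t1).symm
  rw [h4, add_comm]
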